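/- Consider the category whose objects are pairs of a type X together with two binary relations R_P and R_S on X, and whose morphisms (X,R_P,R_S) → (X',R'_P,R'_S) are functions h : X → X' such that R_P x1 x2 implies R'_P (h x1) (h x2) and R_S x1 x2 implies R'_S (h x1) (h x2). Define the product of two objects componentwise with relations ((x1,y1),(x2,y2)) related at level i iff (x1,x2) and (y1,y2) are both related at level i, and define the candidate exponential Y ⇒ Z to have underlying set Hom(Y,Z) with f and g related at level i iff for all (y1,y2) related at level i in Y, (f y1, g y2) are related at level i in Z. Let X := (Bool, R_P = R_S = {(false,false)}), Y := (Bool, R_P = the total relation, R_S = the diagonal), and Z := (Bool, R_P = R_S = the diagonal). Then the set Hom(X × Y, Z) has exactly 8 elements while Hom(X, Y ⇒ Z) has exactly 4 elements; in particular, the candidate exponential Y ⇒ Z does not satisfy the universal property of an exponential object. -/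

import Mathlib

/-- An object of the relational category `DC` over the two-point lattice
`Public ⊏ Secret`: a type with two binary relations. -/
structure RelObj where
  carrier : Type
  RP : carrier → carrier → Prop
  RS : carrier → carrier → Prop

/-- Morphisms of `DC`: functions preserving both relations. -/
def DCHom (X Y : RelObj) : Type :=
  { h : X.carrier → Y.carrier //
      (∀ a b, X.RP a b → Y.RP (h a) (h b)) ∧ (∀ a b, X.RS a b → Y.RS (h a) (h b)) }

/-- The product of `DC`-objects, with relations defined componentwise. -/
def RelObj.prod (X Y : RelObj) : RelObj where
  carrier := X.carrier × Y.carrier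
  RP := fun p q => X.RP p.1 q.1 ∧ Y.RP p.2 q.2
  RS := fun p q => X.RS p.1 q.1 ∧ Y.RS p.2 q.2

/-- The candidate exponential of `DC`-objects: the set of morphisms, with `f, g` related
at a level iff they send related arguments to related results at that level. -/
def RelObj.exp (Y Z : RelObj) : RelObj where
  carrier := DCHom Y Z
  RP := fun f g => ∀ a b, Y.RP a b → Z.RP (f.1 a) (g.1 b)
  RS := fun f g => ∀ a b, Y.RS a b → Z.RS (f.1 a) (g.1 b)

/-- `X := (Bool, R_P = R_S = {(false, false)})`. -/
def Xctr : RelObj := ⟨Bool, fun a b => a = false ∧ b = false, fun a b => a = false ∧ b = false⟩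

/-- `Y := (Bool, R_P = total, R_S = diagonal)`. -/
def Yctr : RelObj := ⟨Bool, fun _ _ => True, fun a b => a = b⟩

/-- `Z := (Bool, R_P = R_S = diagonal)`. -/
def Zctr : RelObj := ⟨Bool, fun a b => a = b, fun a b => a = b⟩

section Aux

instance : Fintype Xctr.carrier := inferInstanceAs (Fintype Bool)
instance : Fintype Yctr.carrier := inferInstanceAs (Fintype Bool)
instance : Fintype Zctr.carrier := inferInstanceAs (Fintype Bool)
instance : DecidableEq Xctr.carrier := inferInstanceAs (DecidableEq Bool)
instance : DecidableEq Yctr.carrier := inferInstanceAs (DecidableEq Bool)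
instance : DecidableEq Zctr.carrier := inferInstanceAs (DecidableEq Bool)
instance (a b : Xctr.carrier) : Decidable (Xctr.RP a b) :=
  @instDecidableAnd (a = false) (b = false) (Bool.decEq a false) (Bool.decEq b false)
instance (a b : Xctr.carrier) : Decidable (Xctr.RS a b) :=
  @instDecidableAnd (a = false) (b = false) (Bool.decEq a false) (Bool.decEq b false)
instance (a b : Yctr.carrier) : Decidable (Yctr.RP a b) := inferInstanceAs (Decidable True)
instance (a b : Yctr.carrier) : Decidable (Yctr.RS a b) := inferInstanceAs (Decidable (a = b))
instance (a b : Zctr.carrier) : Decidable (Zctr.RP a b) := inferInstanceAs (Decidable (a = b))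
instance (a b : Zctr.carrier) : Decidable (Zctr.RS a b) := inferInstanceAs (Decidable (a = b))

instance decYZ : DecidableEq (DCHom Yctr Zctr) := by
  unfold DCHom; exact Subtype.instDecidableEq

instance finYZ : Fintype (DCHom Yctr Zctr) := by
  unfold DCHom; exact Subtype.fintype _

instance : Fintype (RelObj.exp Yctr Zctr).carrier := finYZ
instance : DecidableEq (RelObj.exp Yctr Zctr).carrier := decYZ
instance (f g : (RelObj.exp Yctr Zctr).carrier) : Decidable ((RelObj.exp Yctr Zctr).RP f g) :=
  inferInstanceAs (Decidable (∀ a b, Yctr.RP a b → Zctr.RP (f.1 a) (g.1 b)))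
instance (f g : (RelObj.exp Yctr Zctr).carrier) : Decidable ((RelObj.exp Yctr Zctr).RS f g) :=
  inferInstanceAs (Decidable (∀ a b, Yctr.RS a b → Zctr.RS (f.1 a) (g.1 b)))

instance : Fintype (RelObj.prod Xctr Yctr).carrier :=
  inferInstanceAs (Fintype (Xctr.carrier × Yctr.carrier))
instance : DecidableEq (RelObj.prod Xctr Yctr).carrier :=
  inferInstanceAs (DecidableEq (Xctr.carrier × Yctr.carrier))
instance (p q : (RelObj.prod Xctr Yctr).carrier) :
    Decidable ((RelObj.prod Xctr Yctr).RP p q) :=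
  inferInstanceAs (Decidable (Xctr.RP p.1 q.1 ∧ Yctr.RP p.2 q.2))
instance (p q : (RelObj.prod Xctr Yctr).carrier) :
    Decidable ((RelObj.prod Xctr Yctr).RS p q) :=
  inferInstanceAs (Decidable (Xctr.RS p.1 q.1 ∧ Yctr.RS p.2 q.2))

instance fin1 : Fintype (DCHom (RelObj.prod Xctr Yctr) Zctr) := by
  unfold DCHom; exact Subtype.fintype _

instance fin2 : Fintype (DCHom Xctr (RelObj.exp Yctr Zctr)) := by
  unfold DCHom; exact Subtype.fintype _

lemma card1 : Nat.card (DCHom (RelObj.prod Xctr Yctr) Zctr) = 8 := by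
  rw [Nat.card_eq_fintype_card]; decide

lemma card2 : Nat.card (DCHom Xctr (RelObj.exp Yctr Zctr)) = 4 := by
  rw [Nat.card_eq_fintype_card]; decide

end Aux

/-- The counterexample showing that Abadi et al.'s relational category `DC` (with
arbitrary binary relations) is not cartesian closed: `Hom(X × Y, Z)` has 8 elements
while `Hom(X, Y ⇒ Z)` has only 4, so the candidate exponential `Y ⇒ Z` cannot satisfy
the universal property of an exponential object (there is not even a bijection of
hom-sets). -/
theorem DC_not_cartesian_closed :
    Nat.card (DCHom (RelObj.prod Xctr Yctr) Zctr) = 8 ∧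
    Nat.card (DCHom Xctr (RelObj.exp Yctr Zctr)) = 4 ∧
    ¬ Nonempty (DCHom (RelObj.prod Xctr Yctr) Zctr ≃ DCHom Xctr (RelObj.exp Yctr Zctr)) := by
  refine ⟨card1, card2, fun ⟨e⟩ => ?_⟩
  have := Nat.card_congr e
  rw [card1, card2] at this
  exact absurd this (by norm_num)
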